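/- Let G be a finite simple graph, k ≥ 1 an integer, and let V(G) = C_1 ∪ … ∪ C_k be a partition of the vertex set such that for every i ∈ {1,…,k}, the graph G has an f_i-coloring, where f_i(v) = 2/3 for v ∈ C_i and f_i(v) = 1/3 for v ∉ C_i. Then G has a c_{(k+1)/(3k)}-coloring; in particular, the fractional chromatic number of G is at most 3k/(k+1). -/

import Mathlib

open MeasureTheory

/-- `φ` is an `f`-coloring of `G`: it assigns to each vertex a measurable subset of `[0,1]`,
adjacent vertices get disjoint sets, and the set of `v` has measure at least `f v`. -/
def IsFracColoring {V : Type*} (G : SimpleGraph V) (f : V → ℚ) (φ : V → Set ℝ) : Prop :=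
  (∀ v, φ v ⊆ Set.Icc (0 : ℝ) 1) ∧
  (∀ v, MeasurableSet (φ v)) ∧
  (∀ u v, G.Adj u v → φ u ∩ φ v = ∅) ∧
  (∀ v, ENNReal.ofReal ((f v : ℝ)) ≤ volume (φ v))

/-- A tight `f`-coloring: the measure of each `φ v` equals `f v`. -/
def IsTightFracColoring {V : Type*} (G : SimpleGraph V) (f : V → ℚ) (φ : V → Set ℝ) : Prop :=
  IsFracColoring G f φ ∧ ∀ v, volume (φ v) = ENNReal.ofReal ((f v : ℝ))

/-- `N ≥ 1` is a common denominator of `f` if `N * f v` is an integer for every `v`. -/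
def IsCommonDenom {V : Type*} (N : ℕ) (f : V → ℚ) : Prop :=
  1 ≤ N ∧ ∀ v, ∃ m : ℤ, (N : ℚ) * f v = (m : ℚ)

/-- `ψ` is an `(f,N)`-coloring of `G`: each vertex gets a subset of `{1,…,N}`,
adjacent vertices get disjoint sets, and `|ψ v| ≥ N * f v` for every vertex `v`. -/
def IsFNColoring {V : Type*} (G : SimpleGraph V) (f : V → ℚ) (N : ℕ) (ψ : V → Finset ℕ) : Prop :=
  (∀ v, ψ v ⊆ Finset.Icc 1 N) ∧
  (∀ u v, G.Adj u v → Disjoint (ψ u) (ψ v)) ∧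
  (∀ v, (N : ℚ) * f v ≤ ((ψ v).card : ℚ))

/-- A tight `(f,N)`-coloring: `|ψ v| = N * f v` for every vertex `v`. -/
def IsTightFNColoring {V : Type*} (G : SimpleGraph V) (f : V → ℚ) (N : ℕ)
    (ψ : V → Finset ℕ) : Prop :=
  IsFNColoring G f N ψ ∧ ∀ v, ((ψ v).card : ℚ) = (N : ℚ) * f v

/-- The fractional chromatic number of `G`:
`1 / sup { x ∈ ℚ ∩ [0,1] : G has a c_x-coloring }`. -/
noncomputable def fracChromaticNumber {V : Type*} (G : SimpleGraph V) : ℝ :=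
  1 / sSup {y : ℝ | ∃ x : ℚ, 0 ≤ x ∧ x ≤ 1 ∧ y = (x : ℝ) ∧
    ∃ φ, IsFracColoring G (fun _ => x) φ}

/-- If `V(G) = C_1 ∪ … ∪ C_k` is a partition (given by `P : V → Fin k`) such that for
every class `C_i` the graph `G` has an `f_i`-coloring (`f_i = 2/3` on `C_i`, `1/3` elsewhere),
then `G` has a `c_{(k+1)/(3k)}`-coloring, and hence the fractional chromatic number of `G`
is at most `3k/(k+1)`. -/
theorem stmt6 {V : Type*} [Fintype V] (G : SimpleGraph V) (k : ℕ) (hk : 1 ≤ k)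
    (P : V → Fin k)
    (h : ∀ i : Fin k, ∃ φ, IsFracColoring G (fun v => if P v = i then 2/3 else 1/3) φ) :
    (∃ φ, IsFracColoring G (fun _ => ((k : ℚ) + 1) / (3 * k)) φ) ∧
      fracChromaticNumber G ≤ (3 * k : ℝ) / (k + 1) := by
  choose φ hφ using h
  have hK0 : (0:ℝ) < (k:ℝ) := by exact_mod_cast hk
  have hKne : (k:ℝ) ≠ 0 := ne_of_gt hK0
  set pre : Fin k → V → Set ℝ :=
    fun i v => (fun x : ℝ => (k:ℝ) * x + (-(i:ℝ))) ⁻¹' (φ i v) with hpre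
  set A : Fin k → V → Set ℝ :=
    fun i v => pre i v ∩ Set.Ico ((i:ℝ)/k) (((i:ℝ)+1)/k) with hA
  set Ψ : V → Set ℝ := fun v => ⋃ i, A i v with hΨ
  have hmeaslin : ∀ i : Fin k, Measurable (fun x : ℝ => (k:ℝ) * x + (-(i:ℝ))) := by
    intro i; fun_prop
  have hmeasA : ∀ i v, MeasurableSet (A i v) :=
    fun i v => ((hmeaslin i) ((hφ i).2.1 v)).inter measurableSet_Ico
  have hsub : ∀ i v, pre i v ⊆ Set.Icc ((i:ℝ)/k) (((i:ℝ)+1)/k) := by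
    intro i v x hx
    obtain ⟨h0, h1⟩ := (hφ i).1 v hx
    simp only at h0 h1
    constructor
    · rw [div_le_iff₀ hK0]; linarith [mul_comm (k:ℝ) x]
    · rw [le_div_iff₀ hK0]; linarith [mul_comm (k:ℝ) x]
  -- disjointness of the intervals
  have hIco : ∀ i j : Fin k, i ≠ j → ∀ x : ℝ,
      x ∈ Set.Ico ((i:ℝ)/k) (((i:ℝ)+1)/k) → x ∈ Set.Ico ((j:ℝ)/k) (((j:ℝ)+1)/k) → False := by
    intro i j hij x hxi hxj
    have hne : (i:ℕ) ≠ (j:ℕ) := fun hc => hij (Fin.ext hc)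
    rcases hne.lt_or_gt with hlt | hlt
    · have : (i:ℝ) + 1 ≤ (j:ℝ) := by exact_mod_cast hlt
      have := hxj.1.trans_lt hxi.2
      have h2 : ((j:ℝ))/k ≥ ((i:ℝ)+1)/k := by gcongr
      linarith
    · have : (j:ℝ) + 1 ≤ (i:ℝ) := by exact_mod_cast hlt
      have := hxi.1.trans_lt hxj.2
      have h2 : ((i:ℝ))/k ≥ ((j:ℝ)+1)/k := by gcongr
      linarith
  have hpdisj : ∀ v u : V, Pairwise fun i j : Fin k => Disjoint (A i v) (A j u) := by
    intro v u i j hij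
    rw [Set.disjoint_left]
    rintro x ⟨_, hx1⟩ ⟨_, hx2⟩
    exact hIco i j hij x hx1 hx2
  -- the coloring property
  have hcol : IsFracColoring G (fun _ => ((k : ℚ) + 1) / (3 * k)) Ψ := by
    refine ⟨?_, ?_, ?_, ?_⟩
    · intro v x hx
      obtain ⟨i, _, hx2⟩ := Set.mem_iUnion.1 hx
      obtain ⟨hx2a, hx2b⟩ := hx2
      constructor
      · have : (0:ℝ) ≤ (i:ℝ)/k := by positivity
        linarith
      · have hik : (i:ℝ) + 1 ≤ (k:ℝ) := by
          have := i.2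
          exact_mod_cast this
        have : ((i:ℝ)+1)/k ≤ 1 := by
          rw [div_le_one hK0]; linarith
        linarith [hx2b.le.trans this]
    · intro v
      exact MeasurableSet.iUnion fun i => hmeasA i v
    · intro u v huv
      rw [Set.eq_empty_iff_forall_notMem]
      rintro x ⟨hxu, hxv⟩
      obtain ⟨i, hxi⟩ := Set.mem_iUnion.1 hxu
      obtain ⟨j, hxj⟩ := Set.mem_iUnion.1 hxv
      by_cases hij : i = j
      · subst hij
        have hmem2 : (k:ℝ) * x + (-(i:ℝ)) ∈ φ i u ∩ φ i v := ⟨hxi.1, hxj.1⟩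
        rw [(hφ i).2.2.1 u v huv] at hmem2
        exact hmem2
      · exact hIco i j hij x hxi.2 hxj.2
    · intro v
      -- volume computation
      have hvol : volume (Ψ v) = ∑' i : Fin k, volume (A i v) := by
        exact measure_iUnion (hpdisj v v) (fun i => hmeasA i v)
      have hvolpre : ∀ i, volume (pre i v) = ENNReal.ofReal ((k:ℝ)⁻¹) * volume (φ i v) := by
        intro i
        have : pre i v = ((k:ℝ) * ·) ⁻¹' ((· + (-(i:ℝ))) ⁻¹' (φ i v)) := rfl
        rw [this, Real.volume_preimage_mul_left hKne,
          measure_preimage_add_right volume (-(i:ℝ)) (φ i v),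
          abs_of_nonneg (by positivity : (0:ℝ) ≤ (k:ℝ)⁻¹)]
      have hvolA : ∀ i, volume (pre i v) ≤ volume (A i v) := by
        intro i
        have hsubA : pre i v \ {((i:ℝ)+1)/k} ⊆ A i v := by
          rintro x ⟨hx1, hx2⟩
          refine ⟨hx1, ?_⟩
          obtain ⟨ha, hb⟩ := hsub i v hx1
          exact ⟨ha, lt_of_le_of_ne hb (by simpa using hx2)⟩
        calc volume (pre i v) = volume (pre i v \ {((i:ℝ)+1)/k}) :=
              (measure_diff_null (measure_singleton _)).symm
          _ ≤ volume (A i v) := measure_mono hsubA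
      rw [hvol]
      have hlow : ∀ i, ENNReal.ofReal ((k:ℝ)⁻¹) *
          ENNReal.ofReal (((if P v = i then 2/3 else 1/3 : ℚ) : ℝ)) ≤ volume (A i v) := by
        intro i
        refine le_trans ?_ (le_trans (le_of_eq (hvolpre i).symm) (hvolA i))
        exact mul_le_mul_right ((hφ i).2.2.2 v) _
      have hcast : ((((k:ℚ)+1)/(3*(k:ℚ)) : ℚ) : ℝ) = (k:ℝ)⁻¹ * (((k:ℝ)+1)/3) := by
        push_cast
        field_simp
      calc ENNReal.ofReal ((((((k:ℚ)+1)/(3*(k:ℚ))) : ℚ) : ℝ))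
          = ENNReal.ofReal ((k:ℝ)⁻¹ * (((k:ℝ)+1)/3)) := by rw [hcast]
        _ = ENNReal.ofReal ((k:ℝ)⁻¹) * ENNReal.ofReal (((k:ℝ)+1)/3) := by
            rw [ENNReal.ofReal_mul (by positivity)]
        _ = ENNReal.ofReal ((k:ℝ)⁻¹) *
              (∑ i : Fin k, ENNReal.ofReal (((if P v = i then 2/3 else 1/3 : ℚ) : ℝ))) := by
            congr 1
            rw [← ENNReal.ofReal_sum_of_nonneg (fun i _ => by positivity)]
            congr 1
            have : ∀ i : Fin k, (((if P v = i then 2/3 else 1/3 : ℚ) : ℝ))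
                = 1/3 + (if P v = i then (1:ℝ)/3 else 0) := by
              intro i
              by_cases hpi : P v = i <;> simp [hpi] <;> norm_num
            rw [Finset.sum_congr rfl (fun i _ => this i)]
            rw [Finset.sum_add_distrib, Finset.sum_const, Finset.sum_ite_eq Finset.univ (P v)
              (fun _ => (1:ℝ)/3)]
            simp [Finset.card_univ]
            ring
        _ = ∑ i : Fin k, ENNReal.ofReal ((k:ℝ)⁻¹) *
              ENNReal.ofReal (((if P v = i then 2/3 else 1/3 : ℚ) : ℝ)) := by
            rw [Finset.mul_sum]
        _ ≤ ∑ i : Fin k, volume (A i v) := Finset.sum_le_sum (fun i _ => hlow i)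
        _ = ∑' i : Fin k, volume (A i v) := (tsum_fintype _).symm
  refine ⟨⟨Ψ, hcol⟩, ?_⟩
  -- second part
  set S := {y : ℝ | ∃ x : ℚ, 0 ≤ x ∧ x ≤ 1 ∧ y = (x : ℝ) ∧
    ∃ φ, IsFracColoring G (fun _ => x) φ} with hS
  have hq0 : (0:ℚ) ≤ ((k:ℚ)+1)/(3*k) := by positivity
  have hq1 : ((k:ℚ)+1)/(3*k) ≤ 1 := by
    rw [div_le_one (by positivity)]
    have : (1:ℚ) ≤ (k:ℚ) := by exact_mod_cast hk
    linarith
  have hymem : ((((k:ℚ)+1)/(3*k) : ℚ) : ℝ) ∈ S :=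
    ⟨((k:ℚ)+1)/(3*k), hq0, hq1, rfl, Ψ, hcol⟩
  have hbdd : BddAbove S := by
    refine ⟨1, ?_⟩
    rintro y ⟨x, hx0, hx1, rfl, _⟩
    exact_mod_cast hx1
  have hy0 : (0:ℝ) < ((((k:ℚ)+1)/(3*k) : ℚ) : ℝ) := by
    have : (0:ℚ) < ((k:ℚ)+1)/(3*k) := by positivity
    exact_mod_cast this
  have hle : ((((k:ℚ)+1)/(3*k) : ℚ) : ℝ) ≤ sSup S := le_csSup hbdd hymem
  unfold fracChromaticNumber
  rw [← hS]
  have : 1 / sSup S ≤ 1 / ((((k:ℚ)+1)/(3*k) : ℚ) : ℝ) :=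
    one_div_le_one_div_of_le hy0 hle
  refine this.trans (le_of_eq ?_)
  push_cast
  rw [one_div_div]
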